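/- Let Z be a locally compact Hausdorff space, X a locally compact Hausdorff space, k : Z → X continuous, and V ⊆ X open. Then the ideal k*(C_0(V))·C_0(Z) of C_0(Z) equals C_0(k⁻¹(V)), i.e., its spectrum is the open subset k⁻¹(V) of Z. -/

import Mathlib

open scoped ZeroAtInfty BoundedContinuousFunction
open WeakDual Filter

/-- The pullback `r*(h) = h ∘ r` of a `C₀` function along a continuous map, as a bounded
continuous function. -/
noncomputable def pullbackBCF {X B : Type*} [TopologicalSpace X] [TopologicalSpace B]
    (r : C(X, B)) (h : C₀(B, ℂ)) : X →ᵇ ℂ :=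
  h.toBCF.compContinuous r

/-- The commutative C*-algebra `H_X = C_b(X) · r*(C₀(B))`, realised as the closure of the
non-unital star subalgebra of `C_b(X)` generated by the products `f · r*(h)`. -/
noncomputable def relSCAlg {X B : Type*} [TopologicalSpace X] [TopologicalSpace B]
    (r : C(X, B)) : NonUnitalStarSubalgebra ℂ (X →ᵇ ℂ) :=
  (NonUnitalStarAlgebra.adjoin ℂ
    {w : X →ᵇ ℂ | ∃ f : X →ᵇ ℂ, ∃ h : C₀(B, ℂ), w = f * pullbackBCF r h}).topologicalClosure

/-- The relative Stone–Čech compactification `β_B X` of a `B`-space `(X, r)`: the character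
space (spectrum) of `H_X = C_b(X) · r*(C₀(B))`. -/
noncomputable def RelSC {X B : Type*} [TopologicalSpace X] [TopologicalSpace B]
    (r : C(X, B)) :=
  characterSpace ℂ (relSCAlg r)

/-- Evaluation at a point `x : X`, as an element of the weak dual of `H_X`. -/
noncomputable def relSCEvalChar {X B : Type*} [TopologicalSpace X] [TopologicalSpace B]
    (r : C(X, B)) (x : X) : WeakDual ℂ (relSCAlg r) :=
  (BoundedContinuousFunction.evalCLM ℂ x).comp
    (⟨{ toFun := fun f => (f : X →ᵇ ℂ),
        map_add' := fun _ _ => rfl,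
        map_smul' := fun _ _ => rfl }, continuous_subtype_val⟩ :
      relSCAlg r →L[ℂ] (X →ᵇ ℂ))

/-- The canonical map `i : X → β_B X`, sending a point to the evaluation character. -/
noncomputable def relSCMap {X B : Type*} [TopologicalSpace X] [TopologicalSpace B]
    [LocallyCompactSpace B] [T2Space B] (r : C(X, B)) (x : X) : RelSC r := by
  refine ⟨relSCEvalChar r x, ?_, fun f g => rfl⟩
  obtain ⟨h, h_comp, -, hx⟩ := exists_continuous_nonneg_pos (r x)
  have hC0 : Tendsto (fun b => (h b : ℂ)) (Filter.cocompact B) (nhds 0) := by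
    exact ((Complex.continuous_ofReal.tendsto 0).comp
      (HasCompactSupport.is_zero_at_infty h_comp))
  set h' : C₀(B, ℂ) := ⟨⟨fun b => (h b : ℂ), Complex.continuous_ofReal.comp h.continuous⟩, hC0⟩
  have hmem : (1 : X →ᵇ ℂ) * pullbackBCF r h' ∈ relSCAlg r :=
    (NonUnitalStarAlgebra.adjoin ℂ _).le_topologicalClosure
      (NonUnitalStarAlgebra.subset_adjoin ℂ _ ⟨1, h', rfl⟩)
  intro h0
  have h2 : ((1 : X →ᵇ ℂ) * pullbackBCF r h') x = 0 := by
    have := congrArg (fun φ : WeakDual ℂ (relSCAlg r) => φ ⟨_, hmem⟩) h0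
    exact this
  apply hx
  have h3 : (h (r x) : ℂ) = 0 := by
    simpa [pullbackBCF, h', BoundedContinuousFunction.coe_compContinuous] using h2
  exact_mod_cast h3

/-- For `k : Z → X` continuous between locally compact Hausdorff spaces and `V ⊆ X` open,
the closed ideal `k*(C₀(V))·C₀(Z)` of `C₀(Z)` equals `C₀(k⁻¹(V))`, realised as the ideal
of functions vanishing off the open set `k⁻¹(V)`. -/
theorem pullback_ideal_eq_preimage_ideal
    {Z X : Type*} [TopologicalSpace Z] [TopologicalSpace X]
    [LocallyCompactSpace Z] [T2Space Z] [LocallyCompactSpace X] [T2Space X]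
    (k : C(Z, X)) (V : Set X) (hV : IsOpen V) :
    closure (↑(Submodule.span ℂ
        {w : C₀(Z, ℂ) | ∃ g : C₀(X, ℂ), (∀ x ∉ V, g x = 0) ∧
          ∃ h : C₀(Z, ℂ), ⇑w = fun z => g (k z) * h z}) : Set C₀(Z, ℂ)) =
      {w : C₀(Z, ℂ) | ∀ z, k z ∉ V → w z = 0} := by
  apply Set.Subset.antisymm
  · -- forward: closure of span ⊆ vanishing set
    have hclosed : IsClosed {w : C₀(Z, ℂ) | ∀ z, k z ∉ V → w z = 0} := by
      have : {w : C₀(Z, ℂ) | ∀ z, k z ∉ V → w z = 0} =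
          ⋂ z ∈ {z : Z | k z ∉ V}, {w : C₀(Z, ℂ) | w z = 0} := by
        ext w; simp [Set.mem_iInter]
      rw [this]
      refine isClosed_biInter fun z _ => ?_
      have hcont : Continuous fun w : C₀(Z, ℂ) => w z :=
        (continuous_eval_const z : Continuous fun f : Z →ᵇ ℂ => f z).comp
          (ZeroAtInftyContinuousMap.isometry_toBCF.continuous)
      exact isClosed_eq hcont continuous_const
    refine closure_minimal ?_ hclosed
    have hsub : Submodule.span ℂ
        {w : C₀(Z, ℂ) | ∃ g : C₀(X, ℂ), (∀ x ∉ V, g x = 0) ∧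
          ∃ h : C₀(Z, ℂ), ⇑w = fun z => g (k z) * h z} ≤
        { carrier := {w : C₀(Z, ℂ) | ∀ z, k z ∉ V → w z = 0}
          add_mem' := fun {a b} ha hb z hz => by
            simp [ZeroAtInftyContinuousMap.add_apply, ha z hz, hb z hz]
          zero_mem' := fun z _ => rfl
          smul_mem' := fun c {a} ha z hz => by
            simp [ZeroAtInftyContinuousMap.smul_apply, ha z hz] } := by
      rw [Submodule.span_le]
      rintro w ⟨g, hg, h, hw⟩ z hz
      show w z = 0
      rw [show w z = g (k z) * h z from congrFun hw z, hg (k z) hz, zero_mul]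
    exact hsub
  · -- reverse: every function vanishing off k⁻¹ V is in the closure
    intro w hw
    rw [Metric.mem_closure_iff]
    intro ε hε
    -- the set where ‖w‖ ≥ ε/2 is compact and contained in k⁻¹ V
    set S : Set Z := {z | ε / 2 ≤ ‖w z‖} with hS
    obtain ⟨K, hK, hKc⟩ :
        ∃ K : Set Z, IsCompact K ∧ Kᶜ ⊆ w ⁻¹' Metric.ball 0 (ε / 2) := by
      have h := (zero_at_infty w).eventually
        (Metric.ball_mem_nhds (0 : ℂ) (show (0 : ℝ) < ε / 2 by linarith))
      rw [Filter.eventually_iff, Filter.mem_cocompact] at h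
      obtain ⟨K, hK, hKc⟩ := h
      exact ⟨K, hK, fun z hz => hKc hz⟩
    have hSK : S ⊆ K := by
      intro z hz
      by_contra hzK
      have h1 := hKc hzK
      simp only [Set.mem_preimage, Metric.mem_ball, dist_zero_right] at h1
      exact absurd (hz : ε / 2 ≤ ‖w z‖) (not_le.2 h1)
    have hSclosed : IsClosed S := by
      have : Continuous fun z => ‖w z‖ := w.continuous.norm
      exact isClosed_le continuous_const this
    have hScompact : IsCompact S := hK.of_isClosed_subset hSclosed hSK
    have hSV : k '' S ⊆ V := by
      rintro x ⟨z, hz, rfl⟩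
      by_contra hx
      have h0 : w z = 0 := hw z hx
      have h2 : ε / 2 ≤ ‖w z‖ := hz
      rw [h0, norm_zero] at h2
      linarith
    -- Urysohn function on X
    obtain ⟨g, hg1, hg0, hgc, hg01⟩ :=
      exists_continuous_one_zero_of_isCompact (hScompact.image k.continuous)
        hV.isClosed_compl (Set.disjoint_compl_right_iff_subset.mpr hSV)
    have hgC0 : Filter.Tendsto (fun x => (g x : ℂ)) (Filter.cocompact X) (nhds 0) := by
      exact ((Complex.continuous_ofReal.tendsto 0).comp hgc.is_zero_at_infty)
    set gC : C₀(X, ℂ) :=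
      ⟨⟨fun x => (g x : ℂ), Complex.continuous_ofReal.comp g.continuous⟩, hgC0⟩ with hgCdef
    -- the approximant u = (g ∘ k) · w
    have hucont : Continuous fun z => (g (k z) : ℂ) * w z :=
      ((Complex.continuous_ofReal.comp (g.continuous.comp k.continuous))).mul w.continuous
    have huinf : Filter.Tendsto (fun z => (g (k z) : ℂ) * w z)
        (Filter.cocompact Z) (nhds 0) := by
      apply squeeze_zero_norm (a := fun z => ‖w z‖)
      · intro z
        rw [norm_mul]
        have h01 := hg01 (k z)
        have : ‖(g (k z) : ℂ)‖ ≤ 1 := by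
          rw [Complex.norm_real, Real.norm_eq_abs, abs_le]
          constructor <;> [linarith [h01.1]; exact h01.2]
        calc ‖(g (k z) : ℂ)‖ * ‖w z‖ ≤ 1 * ‖w z‖ :=
              mul_le_mul_of_nonneg_right this (norm_nonneg _)
          _ = ‖w z‖ := one_mul _
      · simpa using (zero_at_infty w).norm
    set u : C₀(Z, ℂ) := ⟨⟨fun z => (g (k z) : ℂ) * w z, hucont⟩, huinf⟩ with hudef
    refine ⟨u, ?_, ?_⟩
    · exact Submodule.subset_span
        ⟨gC, fun x hx => by simpa [hgCdef] using congrArg Complex.ofReal (hg0 hx), w, rfl⟩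
    · -- dist w u ≤ ε/2 < ε
      have hle : dist w u ≤ ε / 2 := by
        rw [← ZeroAtInftyContinuousMap.dist_toBCF_eq_dist]
        rw [BoundedContinuousFunction.dist_le (by linarith)]
        intro z
        show dist (w z) ((g (k z) : ℂ) * w z) ≤ ε / 2
        rw [dist_eq_norm]
        by_cases hz : z ∈ S
        · have : g (k z) = 1 := hg1 ⟨z, hz, rfl⟩
          simp [this]
          linarith
        · have hwz : ‖w z‖ ≤ ε / 2 := by
            simp only [hS, Set.mem_setOf_eq, not_le] at hz
            linarith
          have h01 := hg01 (k z)
          calc ‖w z - (g (k z) : ℂ) * w z‖ = ‖(1 - (g (k z) : ℂ)) * w z‖ := by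
                ring_nf
            _ = ‖(1 - (g (k z) : ℂ))‖ * ‖w z‖ := norm_mul _ _
            _ ≤ 1 * ‖w z‖ := by
                refine mul_le_mul_of_nonneg_right ?_ (norm_nonneg _)
                have : ((1 : ℝ) - g (k z) : ℝ) = ((1 - (g (k z) : ℂ)).re) := by
                  simp
                rw [show (1 - (g (k z) : ℂ)) = ((1 - g (k z) : ℝ) : ℂ) by push_cast; ring]
                rw [Complex.norm_real, Real.norm_eq_abs, abs_le]
                constructor <;> [linarith [h01.2]; linarith [h01.1]]
            _ ≤ ε / 2 := by rw [one_mul]; exact hwz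
      linarith
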